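/- Let D, C, A be measurable spaces and e : D ≃ᵐ C × A a measurable equivalence. Let μ, ν, α be probability measures on D, C, A respectively with Measure.map e μ = ν.prod α. Define get : D → A by get d = (e d).2 and put : D → A → D by put d a = e.symm ((e d).1, a). Then the joint law of (a, put(d, a)) for (d, a) drawn independently from μ × α equals the joint law of (get(d), d) for d drawn from μ; that is, Measure.map (fun p : D × A => (p.2, put p.1 p.2)) (μ.prod α) = Measure.map (fun d => (get d, d)) μ. (The paper's Proposition 'Manipulator as Bayesian inversion': put composed with an independent copy of the data source is the Bayesian inversion of the classifier get with respect to μ.) -/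

import Mathlib

open MeasureTheory

theorem manipulator_as_bayesian_inversion
    {D C A : Type*} [MeasurableSpace D] [MeasurableSpace C] [MeasurableSpace A]
    (e : D ≃ᵐ C × A)
    (μ : Measure D) (ν : Measure C) (α : Measure A)
    [IsProbabilityMeasure μ] [IsProbabilityMeasure ν] [IsProbabilityMeasure α]
    (h : Measure.map e μ = ν.prod α)
    (get : D → A) (put : D → A → D)
    (hget : ∀ d, get d = (e d).2)
    (hput : ∀ d a, put d a = e.symm ((e d).1, a)) :
    Measure.map (fun p : D × A => (p.2, put p.1 p.2)) (μ.prod α) =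
      Measure.map (fun d => (get d, d)) μ := by
  have hμ : μ = Measure.map e.symm (ν.prod α) := by
    rw [← h, Measure.map_map e.symm.measurable e.measurable]
    simp [Function.comp]
  have hmid : Measurable fun p : C × A => (p.2, e.symm p) :=
    measurable_snd.prodMk e.symm.measurable
  have hputfun : (fun p : D × A => (p.2, put p.1 p.2)) =
      fun p : D × A => (p.2, e.symm ((e p.1).1, p.2)) := by
    funext p; simp [hput]
  have hF : Measurable fun p : D × A => (p.2, put p.1 p.2) := by
    rw [hputfun]
    exact measurable_snd.prodMk
      (e.symm.measurable.comp
        (((e.measurable.comp measurable_fst).fst).prodMk measurable_snd))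
  -- RHS
  have hRHS : Measure.map (fun d => (get d, d)) μ =
      Measure.map (fun p : C × A => (p.2, e.symm p)) (ν.prod α) := by
    have : (fun d => (get d, d)) = (fun p : C × A => (p.2, e.symm p)) ∘ e := by
      funext d; simp [hget, Function.comp]
    rw [this, ← Measure.map_map hmid e.measurable, h]
  -- LHS
  have hprod : μ.prod α =
      Measure.map (Prod.map (⇑e.symm) id) ((ν.prod α).prod α) := by
    rw [← Measure.map_prod_map _ _ e.symm.measurable measurable_id,
      Measure.map_id, ← hμ]
  have hfstmeas : Measurable fun q : (C × A) × A => (q.1.1, q.2) :=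
    measurable_fst.fst.prodMk measurable_snd
  have hfst : Measure.map (fun q : (C × A) × A => (q.1.1, q.2))
      ((ν.prod α).prod α) = ν.prod α := by
    have : (fun q : (C × A) × A => (q.1.1, q.2)) =
        Prod.map (Prod.fst : C × A → C) (id : A → A) := rfl
    rw [this, ← Measure.map_prod_map _ _ measurable_fst measurable_id,
      Measure.map_id, Measure.map_fst_prod]
    simp
  calc Measure.map (fun p : D × A => (p.2, put p.1 p.2)) (μ.prod α)
      = Measure.map ((fun p : D × A => (p.2, put p.1 p.2)) ∘
          Prod.map (⇑e.symm) id) ((ν.prod α).prod α) := by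
        rw [hprod, Measure.map_map hF (e.symm.measurable.prodMap measurable_id)]
    _ = Measure.map ((fun p : C × A => (p.2, e.symm p)) ∘
          (fun q : (C × A) × A => (q.1.1, q.2))) ((ν.prod α).prod α) := by
        congr 1
        funext q
        simp [hput, Function.comp]
    _ = Measure.map (fun p : C × A => (p.2, e.symm p))
          (Measure.map (fun q : (C × A) × A => (q.1.1, q.2))
            ((ν.prod α).prod α)) := by
        rw [Measure.map_map hmid hfstmeas]
    _ = Measure.map (fun d => (get d, d)) μ := by rw [hfst, hRHS]
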